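/- Let n be a positive integer and r a real number with 0 < r < n. For each k ∈ ℕ let D_k be the collection of all dyadic cubes ∏_{i<n} [j_i/2^k, (j_i+1)/2^k] ⊆ ℝⁿ with j_i ∈ {0, …, 2^k−1}, and let T_k ⊆ D_k be a finite subcollection with |T_k| ≤ 2^{k r/2} (as real numbers). Then the set N_T = ⋂_{k∈ℕ} ⋃_{Q ∈ T_k} Q has r-dimensional Hausdorff measure zero. -/

import Mathlib

open MeasureTheory Set
open scoped ENNReal MeasureTheory Topology

noncomputable section

/-- The collection of dyadic cubes `∏_{i<n} [jᵢ/2^k, (jᵢ+1)/2^k]` with `jᵢ ∈ {0,…,2^k−1}`. -/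
def dyadicCubes (n k : ℕ) : Set (Set (EuclideanSpace ℝ (Fin n))) :=
  { Q | ∃ j : Fin n → ℕ, (∀ i, j i < 2 ^ k) ∧
      Q = {x | ∀ i, x i ∈ Set.Icc ((j i : ℝ) / 2 ^ k) (((j i : ℝ) + 1) / 2 ^ k)} }

/-- If `T_k` is a family of at most `2^{k r / 2}` dyadic cubes of generation `k`, then
`N_T = ⋂_k ⋃ T_k` has `r`-dimensional Hausdorff measure zero. -/
theorem stmt14 (n : ℕ) (r : ℝ) (hn : 1 ≤ n) (hr0 : 0 < r) (hrn : r < n)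
    (T : ℕ → Set (Set (EuclideanSpace ℝ (Fin n))))
    (hT : ∀ k, T k ⊆ dyadicCubes n k)
    (hTfin : ∀ k, (T k).Finite)
    (hTcard : ∀ k : ℕ, ((T k).ncard : ℝ) ≤ (2 : ℝ) ^ ((k : ℝ) * r / 2)) :
    μH[r] (⋂ k : ℕ, ⋃₀ T k) = 0 := by
  haveI : ∀ k, Fintype ↥(T k) := fun k => (hTfin k).fintype
  set c : ℝ := Real.sqrt n with hc_def
  have hc : 0 ≤ c := Real.sqrt_nonneg _
  -- diameter bound on dyadic cubes
  have hdiam : ∀ k, ∀ Q ∈ T k, EMetric.diam Q ≤ ENNReal.ofReal (c / 2 ^ k) := by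
    intro k Q hQ
    obtain ⟨j, hj, rfl⟩ := hT k hQ
    apply EMetric.diam_le
    intro x hx y hy
    rw [edist_dist]
    apply ENNReal.ofReal_le_ofReal
    rw [EuclideanSpace.dist_eq]
    have hle : ∀ i, dist (x i) (y i) ≤ 1 / 2 ^ k := by
      intro i
      have := Real.dist_le_of_mem_Icc (hx i) (hy i)
      have h2 : ((j i : ℝ) + 1) / 2 ^ k - (j i : ℝ) / 2 ^ k = 1 / 2 ^ k := by ring
      linarith
    have key : ∑ i, dist (x i) (y i) ^ 2 ≤ ∑ _i : Fin n, (1 / 2 ^ k : ℝ) ^ 2 := by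
      apply Finset.sum_le_sum
      intro i _
      have h0 : (0:ℝ) ≤ dist (x i) (y i) := dist_nonneg
      nlinarith [hle i]
    calc Real.sqrt (∑ i, dist (x i) (y i) ^ 2)
        ≤ Real.sqrt (∑ _i : Fin n, (1 / 2 ^ k : ℝ) ^ 2) := Real.sqrt_le_sqrt key
      _ = c / 2 ^ k := by
          rw [Finset.sum_const, Finset.card_univ, Fintype.card_fin, nsmul_eq_mul,
            Real.sqrt_mul (by positivity), Real.sqrt_sq (by positivity)]
          ring
  -- apply the covering bound
  have hcov := MeasureTheory.Measure.hausdorffMeasure_le_liminf_sum (l := Filter.atTop) r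
    (⋂ k : ℕ, ⋃₀ T k) (fun k => ENNReal.ofReal (c / 2 ^ k))
    ?htend (fun k (Q : ↥(T k)) => (Q : Set (EuclideanSpace ℝ (Fin n)))) ?hdi ?hsub
  · -- bound the liminf by a sequence tending to zero
    have hzero : Filter.Tendsto
        (fun k : ℕ => ENNReal.ofReal (c ^ r * ((2:ℝ) ^ (-(r/2)))^ k))
        Filter.atTop (𝓝 0) := by
      have hb : (2:ℝ) ^ (-(r/2)) < 1 :=
        Real.rpow_lt_one_of_one_lt_of_neg (by norm_num) (by linarith)
      have hb0 : (0:ℝ) ≤ (2:ℝ) ^ (-(r/2)) := Real.rpow_nonneg (by norm_num) _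
      have h1 : Filter.Tendsto (fun k : ℕ => c ^ r * ((2:ℝ) ^ (-(r/2)))^ k)
          Filter.atTop (𝓝 (c ^ r * 0)) :=
        (tendsto_pow_atTop_nhds_zero_of_lt_one hb0 hb).const_mul _
      rw [mul_zero] at h1
      simpa using ENNReal.tendsto_ofReal h1
    have hsum_le : ∀ k : ℕ,
        (∑ Q : ↥(T k), EMetric.diam (Q : Set (EuclideanSpace ℝ (Fin n))) ^ r)
          ≤ ENNReal.ofReal (c ^ r * ((2:ℝ) ^ (-(r/2)))^ k) := by
      intro k
      have step1 : (∑ Q : ↥(T k), EMetric.diam (Q : Set (EuclideanSpace ℝ (Fin n))) ^ r)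
          ≤ ∑ _Q : ↥(T k), ENNReal.ofReal (c / 2 ^ k) ^ r := by
        apply Finset.sum_le_sum
        intro Q _
        exact ENNReal.rpow_le_rpow (hdiam k Q Q.2) hr0.le
      have step2 : (∑ _Q : ↥(T k), ENNReal.ofReal (c / 2 ^ k) ^ r)
          = ((T k).ncard : ℝ≥0∞) * ENNReal.ofReal ((c / 2 ^ k) ^ r) := by
        rw [Finset.sum_const, Finset.card_univ, nsmul_eq_mul,
          ← Nat.card_eq_fintype_card, Nat.card_coe_set_eq,
          ← ENNReal.ofReal_rpow_of_nonneg (by positivity) hr0.le]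
      have step3 : ((T k).ncard : ℝ≥0∞) * ENNReal.ofReal ((c / 2 ^ k) ^ r)
          ≤ ENNReal.ofReal ((2:ℝ) ^ ((k:ℝ) * r / 2)) * ENNReal.ofReal ((c / 2 ^ k) ^ r) := by
        gcongr
        rw [show ((T k).ncard : ℝ≥0∞) = ENNReal.ofReal ((T k).ncard : ℝ) by
          simp [ENNReal.ofReal_natCast]]
        exact ENNReal.ofReal_le_ofReal (hTcard k)
      have step4 : ENNReal.ofReal ((2:ℝ) ^ ((k:ℝ) * r / 2)) * ENNReal.ofReal ((c / 2 ^ k) ^ r)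
          = ENNReal.ofReal (c ^ r * ((2:ℝ) ^ (-(r/2)))^ k) := by
        rw [← ENNReal.ofReal_mul (by positivity)]
        congr 1
        rw [Real.div_rpow hc (by positivity), ← Real.rpow_natCast (2:ℝ) k,
          ← Real.rpow_natCast ((2:ℝ) ^ (-(r/2))) k,
          ← Real.rpow_mul (by norm_num : (0:ℝ) ≤ 2),
          ← Real.rpow_mul (by norm_num : (0:ℝ) ≤ 2)]
        have h2 : ((2:ℝ) ^ ((k:ℝ) * r / 2)) / ((2:ℝ) ^ ((k:ℝ) * r))
            = (2:ℝ) ^ (-(r/2) * (k:ℝ)) := by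
          rw [← Real.rpow_sub (by norm_num : (0:ℝ) < 2)]; congr 1; ring
        calc (2:ℝ) ^ ((k:ℝ) * r / 2) * (c ^ r / (2:ℝ) ^ ((k:ℝ) * r))
            = c ^ r * (((2:ℝ) ^ ((k:ℝ) * r / 2)) / ((2:ℝ) ^ ((k:ℝ) * r))) := by ring
          _ = c ^ r * (2:ℝ) ^ (-(r/2) * (k:ℝ)) := by rw [h2]
      calc _ ≤ _ := step1
        _ = _ := step2
        _ ≤ _ := step3
        _ = _ := step4
    have hlim_le : Filter.liminf
        (fun k : ℕ => ∑ Q : ↥(T k), EMetric.diam (Q : Set (EuclideanSpace ℝ (Fin n))) ^ r)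
        Filter.atTop ≤ 0 := by
      calc Filter.liminf
            (fun k : ℕ => ∑ Q : ↥(T k), EMetric.diam (Q : Set (EuclideanSpace ℝ (Fin n))) ^ r)
            Filter.atTop
          ≤ Filter.liminf (fun k : ℕ => ENNReal.ofReal (c ^ r * ((2:ℝ) ^ (-(r/2)))^ k))
            Filter.atTop := Filter.liminf_le_liminf (Filter.Eventually.of_forall hsum_le)
        _ = 0 := hzero.liminf_eq
    exact le_antisymm (hcov.trans hlim_le) zero_le
  · -- radii tend to zero
    have h1 : Filter.Tendsto (fun k : ℕ => c * (1/2:ℝ) ^ k) Filter.atTop (𝓝 (c * 0)) :=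
      (tendsto_pow_atTop_nhds_zero_of_lt_one (by norm_num) (by norm_num)).const_mul _
    rw [mul_zero] at h1
    have := ENNReal.tendsto_ofReal h1
    simpa [div_eq_mul_inv, one_div, inv_pow] using this
  · exact Filter.Eventually.of_forall fun k Q => hdiam k Q Q.2
  · refine Filter.Eventually.of_forall fun k => ?_
    intro x hx
    have := Set.mem_iInter.1 hx k
    rw [Set.sUnion_eq_iUnion] at this
    exact this
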